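/- arXiv:math/0502290 — 2 statements merged into one kernel-verified Lean document; each statement's English description precedes it below -/
import Mathlib

section
/- For every f ∈ L²_loc(ℝᵈ) and u ∈ L²_loc(ℝᵈ) with ‖f‖_Ḃ < ∞ and ‖u‖_{Ḃ*} < ∞, the product fu is integrable and |∫_{ℝᵈ} f(x) u(x) dx| ≤ ‖f‖_Ḃ · ‖u‖_{Ḃ*}. -/
open MeasureTheory Metric Complex Filter
open scoped ENNReal Topology

noncomputable section

abbrev Euc (d : ℕ) := EuclideanSpace ℝ (Fin d)

def Cann (d : ℕ) (j : ℤ) : Set (Euc d) := {x | (2:ℝ)^j ≤ ‖x‖ ∧ ‖x‖ ≤ (2:ℝ)^(j+1)}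

def bTerm {d : ℕ} (f : Euc d → ℂ) (j : ℤ) : ℝ :=
  ((2:ℝ)^(j+1) * ∫ x in Cann d j, ‖f x‖^2) ^ ((1:ℝ)/2)

def bNorm {d : ℕ} (f : Euc d → ℂ) : ℝ := ∑' j : ℤ, bTerm f j

def bStarSq {d : ℕ} (u : Euc d → ℂ) : ℝ :=
  ⨆ R : {R : ℝ // 0 < R}, (1 / (R:ℝ)) * ∫ x in ball (0:Euc d) R, ‖u x‖^2

def pd {d : ℕ} {F : Type} [NormedAddCommGroup F] [NormedSpace ℝ F]
    (u : Euc d → F) (i : Fin d) (x : Euc d) : F :=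
  fderiv ℝ u x (EuclideanSpace.single i 1)

def lap {d : ℕ} {F : Type} [NormedAddCommGroup F] [NormedSpace ℝ F]
    (u : Euc d → F) (x : Euc d) : F :=
  ∑ i, pd (pd u i) i x

def gradSq {d : ℕ} (u : Euc d → ℂ) (x : Euc d) : ℝ := ∑ i, ‖pd u i x‖^2

lemma cann_meas {d : ℕ} (j : ℤ) : MeasurableSet (Cann d j) := by
  have : Cann d j = (fun x : Euc d => ‖x‖) ⁻¹' (Set.Icc ((2:ℝ)^j) ((2:ℝ)^(j+1))) := rfl
  rw [this]; exact measurable_norm measurableSet_Icc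

lemma bTerm_nonneg {d : ℕ} (f : Euc d → ℂ) (j : ℤ) : 0 ≤ bTerm f j := by
  refine Real.rpow_nonneg (mul_nonneg (by positivity) ?_) _
  exact setIntegral_nonneg (cann_meas j) fun x _ => sq_nonneg _

/-- Duality: |∫ f u| ≤ ‖f‖_Ḃ ‖u‖_{Ḃ*} for f ∈ Ḃ, u ∈ Ḃ*, both L²_loc. -/
theorem duality_B_Bstar {d : ℕ} (f u : Euc d → ℂ)
    (hfm : AEStronglyMeasurable f volume) (hum : AEStronglyMeasurable u volume)
    (hfloc : ∀ R > 0, IntegrableOn (fun x => ‖f x‖^2) (ball (0:Euc d) R) volume)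
    (huloc : ∀ R > 0, IntegrableOn (fun x => ‖u x‖^2) (ball (0:Euc d) R) volume)
    (hfB : Summable (bTerm f))
    (huB : BddAbove (Set.range fun R : {R : ℝ // 0 < R} =>
      (1 / (R:ℝ)) * ∫ x in ball (0:Euc d) R, ‖u x‖^2)) :
    Integrable (fun x => f x * u x) volume ∧
      ‖∫ x, f x * u x‖ ≤ bNorm f * Real.sqrt (bStarSq u) := by
  classical
  set M : ℝ := bStarSq u with hMdef
  have hMle : ∀ R : ℝ, 0 < R → (1/R) * ∫ x in ball (0:Euc d) R, ‖u x‖^2 ≤ M :=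
    fun R hR => le_ciSup huB ⟨R, hR⟩
  have hball : ∀ R : ℝ, 0 < R → ∫ x in ball (0:Euc d) R, ‖u x‖^2 ≤ M * R := by
    intro R hR
    have h1 := mul_le_mul_of_nonneg_right (hMle R hR) hR.le
    calc ∫ x in ball (0:Euc d) R, ‖u x‖^2
        = ((1/R) * ∫ x in ball (0:Euc d) R, ‖u x‖^2) * R := by field_simp
      _ ≤ M * R := h1
  have hM0 : 0 ≤ M := by
    refine le_trans ?_ (hMle 1 one_pos)
    have : (0:ℝ) ≤ ∫ x in ball (0:Euc d) 1, ‖u x‖^2 :=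
      setIntegral_nonneg measurableSet_ball fun x _ => sq_nonneg _
    simpa using this
  have hbN0 : 0 ≤ bNorm f := tsum_nonneg (bTerm_nonneg f)
  rcases Nat.eq_zero_or_pos d with hd | hd
  · -- degenerate case d = 0
    subst hd
    haveI : Subsingleton (Euc 0) := inferInstance
    have hvol : (volume (Set.univ : Set (Euc 0))) = 1 := by
      have h := (EuclideanSpace.volume_preserving_symm_measurableEquiv_toLp (ι := Fin 0)).measure_preimage
        (MeasurableSet.univ.nullMeasurableSet)
      simpa [volume_pi, Measure.pi_univ] using h
    have hballu : ∀ R : ℝ, 0 < R → ball (0:Euc 0) R = Set.univ := by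
      intro R hR
      apply Set.eq_univ_of_forall
      intro x
      rw [Subsingleton.elim x 0]
      simpa using hR
    have hu0 : u 0 = 0 := by
      by_contra h
      have hpos : 0 < ‖u 0‖^2 := pow_pos (norm_pos_iff.2 h) 2
      have hint : ∀ R : ℝ, 0 < R → ∫ x in ball (0:Euc 0) R, ‖u x‖^2 = ‖u 0‖^2 := by
        intro R hR
        rw [hballu R hR, Measure.restrict_univ]
        have : (fun x : Euc 0 => ‖u x‖^2) = fun _ => ‖u 0‖^2 := by
          funext x; rw [Subsingleton.elim x 0]
        rw [this, integral_const, measureReal_def, hvol]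
        simp
      have hK : ∀ R : ℝ, 0 < R → ‖u 0‖^2 ≤ M * R := by
        intro R hR; rw [← hint R hR]; exact hball R hR
      have hMpos : 0 < M := by
        have := hK 1 one_pos; nlinarith
      have h1 := hK (‖u 0‖^2 / (2*M)) (by positivity)
      have h2 : M * (‖u 0‖^2 / (2*M)) = ‖u 0‖^2 / 2 := by
        field_simp
      rw [h2] at h1
      linarith
    have hzero : (fun x : Euc 0 => f x * u x) = fun _ => 0 := by
      funext x; rw [Subsingleton.elim x 0, hu0, mul_zero]
    rw [hzero]
    refine ⟨integrable_zero _ _ _, ?_⟩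
    simp only [integral_zero, norm_zero]
    positivity
  · -- main case d ≥ 1
    haveI : Nonempty (Fin d) := ⟨⟨0, hd⟩⟩
    haveI : Nontrivial (Euc d) := inferInstance
    haveI : NullSingletonClass (volume : Measure (Euc d)) := inferInstance
    set A : ℤ → Set (Euc d) := fun j => {x | (2:ℝ)^j ≤ ‖x‖ ∧ ‖x‖ < (2:ℝ)^(j+1)} with hA
    have hAmeas : ∀ j, MeasurableSet (A j) := by
      intro j
      have : A j = (fun x : Euc d => ‖x‖) ⁻¹' (Set.Ico ((2:ℝ)^j) ((2:ℝ)^(j+1))) := rfl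
      rw [this]; exact measurable_norm measurableSet_Ico
    have hAdisj : Pairwise (Function.onFun Disjoint A) := by
      have key : ∀ i j : ℤ, i < j → Disjoint (A i) (A j) := by
        intro i j hij
        refine Set.disjoint_left.2 fun x hxi hxj => ?_
        have h1 : (2:ℝ)^(i+1) ≤ (2:ℝ)^j := by
          apply zpow_le_zpow_right₀ one_le_two; omega
        exact lt_irrefl _ ((hxj.1.trans_lt hxi.2).trans_le h1)
      intro i j hij
      rcases lt_or_gt_of_ne hij with h | h
      · exact key i j h
      · exact (key j i h).symm
    have hAcover : ∀ᵐ x : Euc d ∂volume, x ∈ ⋃ j, A j := by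
      have hsub : (⋃ j, A j)ᶜ ⊆ {(0:Euc d)} := by
        intro x hx
        simp only [Set.mem_compl_iff, Set.mem_iUnion, not_exists] at hx
        by_contra hx0
        have hxn : 0 < ‖x‖ := norm_pos_iff.2 (by simpa using hx0)
        obtain ⟨n, hn⟩ := exists_mem_Ico_zpow hxn one_lt_two
        exact hx n ⟨hn.1, hn.2⟩
      exact mem_ae_iff.2 (measure_mono_null hsub (measure_singleton 0))
    have hfme : AEMeasurable (fun x => (‖f x‖₊ : ℝ≥0∞)) volume := hfm.enorm
    have hume : AEMeasurable (fun x => (‖u x‖₊ : ℝ≥0∞)) volume := hum.enorm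
    have hsq : ∀ (g : Euc d → ℂ) (x : Euc d),
        ENNReal.ofReal (‖g x‖^2) = ((‖g x‖₊ : ℝ≥0∞)) ^ (2:ℝ) := by
      intro g x
      rw [ENNReal.rpow_two, sq, ENNReal.ofReal_mul (norm_nonneg _), ← coe_nnnorm, ENNReal.ofReal_coe_nnreal]
      ring
    have key : ∀ j : ℤ, ∫⁻ x in A j, (‖f x‖₊ : ℝ≥0∞) * ‖u x‖₊
        ≤ ENNReal.ofReal (bTerm f j * Real.sqrt M) := by
      intro j
      have hpow : (0:ℝ) < (2:ℝ)^(j+1) := zpow_pos two_pos _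
      have hCsub : Cann d j ⊆ ball (0:Euc d) ((2:ℝ)^(j+1) + 1) := by
        intro x hx
        exact mem_ball_zero_iff.2 (lt_of_le_of_lt hx.2 (by linarith))
      have hfint : IntegrableOn (fun x => ‖f x‖^2) (Cann d j) volume :=
        (hfloc _ (by positivity)).mono_set hCsub
      set Fj := ∫ x in Cann d j, ‖f x‖^2 with hFj
      have hFj0 : 0 ≤ Fj := setIntegral_nonneg (cann_meas j) fun x _ => sq_nonneg _
      have hf2 : ∫⁻ x in A j, ((‖f x‖₊:ℝ≥0∞)) ^ (2:ℝ) ≤ ENNReal.ofReal Fj := by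
        have hAC : A j ⊆ Cann d j := fun x hx => ⟨hx.1, hx.2.le⟩
        refine le_trans (lintegral_mono_set hAC) (le_of_eq ?_)
        rw [hFj, ofReal_integral_eq_lintegral_ofReal hfint
          (Eventually.of_forall fun x => sq_nonneg _)]
        exact lintegral_congr fun x => (hsq f x).symm
      have hu2 : ∫⁻ x in A j, ((‖u x‖₊:ℝ≥0∞)) ^ (2:ℝ)
          ≤ ENNReal.ofReal (M * (2:ℝ)^(j+1)) := by
        have hAB : A j ⊆ ball (0:Euc d) ((2:ℝ)^(j+1)) := fun x hx => mem_ball_zero_iff.2 hx.2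
        refine le_trans (lintegral_mono_set hAB) ?_
        have heq : ∫⁻ x in ball (0:Euc d) ((2:ℝ)^(j+1)), ((‖u x‖₊:ℝ≥0∞)) ^ (2:ℝ)
            = ENNReal.ofReal (∫ x in ball (0:Euc d) ((2:ℝ)^(j+1)), ‖u x‖^2) := by
          rw [ofReal_integral_eq_lintegral_ofReal (huloc _ hpow)
            (Eventually.of_forall fun x => sq_nonneg _)]
          exact lintegral_congr fun x => (hsq u x).symm
        rw [heq]
        exact ENNReal.ofReal_le_ofReal (hball _ hpow)
      have h22 : Real.HolderConjugate 2 2 := by constructor <;> norm_num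
      have hCS := ENNReal.lintegral_mul_le_Lp_mul_Lq (volume.restrict (A j)) h22
        hfme.restrict hume.restrict
      simp only [Pi.mul_apply] at hCS
      calc ∫⁻ x in A j, (‖f x‖₊ : ℝ≥0∞) * ‖u x‖₊
          ≤ (∫⁻ x in A j, ((‖f x‖₊:ℝ≥0∞)) ^ (2:ℝ)) ^ ((1:ℝ)/2)
            * (∫⁻ x in A j, ((‖u x‖₊:ℝ≥0∞)) ^ (2:ℝ)) ^ ((1:ℝ)/2) := hCS
        _ ≤ (ENNReal.ofReal Fj) ^ ((1:ℝ)/2)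
            * (ENNReal.ofReal (M * (2:ℝ)^(j+1))) ^ ((1:ℝ)/2) :=
            mul_le_mul' (ENNReal.rpow_le_rpow hf2 (by norm_num))
              (ENNReal.rpow_le_rpow hu2 (by norm_num))
        _ = ENNReal.ofReal (bTerm f j * Real.sqrt M) := by
            rw [ENNReal.ofReal_rpow_of_nonneg hFj0 (by norm_num),
              ENNReal.ofReal_rpow_of_nonneg (mul_nonneg hM0 hpow.le) (by norm_num),
              ← ENNReal.ofReal_mul (by positivity)]
            congr 1
            show Fj ^ ((1:ℝ)/2) * (M * (2:ℝ)^(j+1)) ^ ((1:ℝ)/2)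
              = ((2:ℝ)^(j+1) * Fj) ^ ((1:ℝ)/2) * Real.sqrt M
            rw [← Real.sqrt_eq_rpow, ← Real.sqrt_eq_rpow, ← Real.sqrt_eq_rpow,
              ← Real.sqrt_mul hFj0, ← Real.sqrt_mul (mul_nonneg hpow.le hFj0)]
            congr 1; ring
    have hGsum : ∫⁻ x, (‖f x‖₊ : ℝ≥0∞) * ‖u x‖₊
        ≤ ENNReal.ofReal (bNorm f * Real.sqrt M) := by
      have h1 : ∫⁻ x, (‖f x‖₊ : ℝ≥0∞) * ‖u x‖₊
          = ∫⁻ x in ⋃ j, A j, (‖f x‖₊ : ℝ≥0∞) * ‖u x‖₊ := by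
        conv_lhs => rw [← Measure.restrict_eq_self_of_ae_mem hAcover]
      rw [h1, lintegral_iUnion hAmeas hAdisj]
      calc ∑' j, ∫⁻ x in A j, (‖f x‖₊ : ℝ≥0∞) * ‖u x‖₊
          ≤ ∑' j, ENNReal.ofReal (bTerm f j * Real.sqrt M) := ENNReal.tsum_le_tsum key
        _ = ENNReal.ofReal (∑' j, bTerm f j * Real.sqrt M) :=
            (ENNReal.ofReal_tsum_of_nonneg
              (fun j => mul_nonneg (bTerm_nonneg f j) (Real.sqrt_nonneg _))
              (hfB.mul_right _)).symm
        _ = ENNReal.ofReal (bNorm f * Real.sqrt M) := by rw [tsum_mul_right]; rfl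
    have hGnn : ∀ x, ((‖f x * u x‖₊ : ℝ≥0∞)) = (‖f x‖₊ : ℝ≥0∞) * ‖u x‖₊ := by
      intro x; rw [nnnorm_mul, ENNReal.coe_mul]
    have hint : Integrable (fun x => f x * u x) volume := by
      refine ⟨hfm.mul hum, ?_⟩
      have : ∫⁻ x, ((‖f x * u x‖₊ : ℝ≥0∞)) < ∞ := by
        calc ∫⁻ x, ((‖f x * u x‖₊ : ℝ≥0∞)) = ∫⁻ x, (‖f x‖₊ : ℝ≥0∞) * ‖u x‖₊ :=
              lintegral_congr fun x => hGnn x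
          _ ≤ ENNReal.ofReal (bNorm f * Real.sqrt M) := hGsum
          _ < ∞ := ENNReal.ofReal_lt_top
      exact this
    refine ⟨hint, ?_⟩
    calc ‖∫ x, f x * u x‖ ≤ ∫ x, ‖f x * u x‖ := norm_integral_le_integral_norm _
      _ = (∫⁻ x, ((‖f x * u x‖₊ : ℝ≥0∞))).toReal :=
          integral_norm_eq_lintegral_enorm (hfm.mul hum)
      _ ≤ (ENNReal.ofReal (bNorm f * Real.sqrt M)).toReal := by
          refine ENNReal.toReal_mono ENNReal.ofReal_ne_top ?_
          calc ∫⁻ x, ((‖f x * u x‖₊ : ℝ≥0∞)) = ∫⁻ x, (‖f x‖₊ : ℝ≥0∞) * ‖u x‖₊ :=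
                lintegral_congr fun x => hGnn x
            _ ≤ _ := hGsum
      _ ≤ bNorm f * Real.sqrt M := (ENNReal.toReal_ofReal (mul_nonneg hbN0 (Real.sqrt_nonneg _))).le
end
end

section
/- Let u ∈ H²(ℝᵈ) solve iεu + Δu + n u = f with ε > 0, n ∈ W^{1,∞}(ℝᵈ, ℝ), f ∈ L², and assume u, ∇u decay sufficiently at infinity. Then (1/2) ∫_{ℝᵈ} (∂_d n) |u|² dx = − Re ∫_{ℝᵈ} f ∂_d ū dx − ε Im ∫_{ℝᵈ} u ∂_d ū dx. -/
open MeasureTheory Metric Complex Filter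
open scoped ENNReal Topology

noncomputable section

section Helpers

variable {k : ℕ}

lemma pd_contDiff {u : Euc k → ℂ} (hu : ContDiff ℝ 2 u) (i : Fin k) :
    ContDiff ℝ 1 (pd u i) := by
  have h1 : ContDiff ℝ 1 (fderiv ℝ u) := hu.fderiv_right (by norm_num)
  exact (ContinuousLinearMap.apply ℝ ℂ (EuclideanSpace.single i 1)).contDiff.comp h1

lemma pd_continuous {F : Type} [NormedAddCommGroup F] [NormedSpace ℝ F]
    {g : Euc k → F} (hg : ContDiff ℝ 1 g) (i : Fin k) :
    Continuous (pd g i) :=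
  (ContinuousLinearMap.apply ℝ F (EuclideanSpace.single i 1)).continuous.comp
    (hg.continuous_fderiv one_ne_zero)

lemma pd_hcs {F : Type} [NormedAddCommGroup F] [NormedSpace ℝ F] {u : Euc k → F}
    (hu : HasCompactSupport u) (i : Fin k) : HasCompactSupport (pd u i) :=
  hu.fderiv_apply (𝕜 := ℝ) _

lemma pd_comm {u : Euc k → ℂ} (hu : ContDiff ℝ 2 u) (i j : Fin k) (x : Euc k) :
    pd (pd u i) j x = pd (pd u j) i x := by
  have hsymm := (hu.contDiffAt (x := x)).isSymmSndFDerivAt (by simp)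
  have hd : DifferentiableAt ℝ (fderiv ℝ u) x :=
    ((hu.fderiv_right (by norm_num)).differentiable one_ne_zero) x
  have key : ∀ a b : Fin k, pd (pd u a) b x
      = fderiv ℝ (fderiv ℝ u) x (EuclideanSpace.single b 1) (EuclideanSpace.single a 1) := by
    intro a b
    have h2 := (ContinuousLinearMap.apply ℝ ℂ (EuclideanSpace.single a 1)).hasFDerivAt.comp x
        hd.hasFDerivAt
    have h3 : fderiv ℝ (fun y => fderiv ℝ u y (EuclideanSpace.single a 1)) x
        = (ContinuousLinearMap.apply ℝ ℂ (EuclideanSpace.single a 1)).comp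
          (fderiv ℝ (fderiv ℝ u) x) := h2.fderiv
    show fderiv ℝ (fun y => fderiv ℝ u y (EuclideanSpace.single a 1)) x
        (EuclideanSpace.single b 1) = _
    rw [h3]
    rfl
  rw [key i j, key j i, hsymm]

lemma re_mul_conj_comm (a b : ℂ) :
    (a * (starRingEnd ℂ) b).re = (b * (starRingEnd ℂ) a).re := by
  simp [Complex.mul_re]
  ring

lemma pd_mul_conj_re {φ ψ : Euc k → ℂ} (hφ : Differentiable ℝ φ) (hψ : Differentiable ℝ ψ)
    (i : Fin k) (x : Euc k) :
    pd (fun y => (φ y * (starRingEnd ℂ) (ψ y)).re) i x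
      = (pd φ i x * (starRingEnd ℂ) (ψ x)).re
        + (φ x * (starRingEnd ℂ) (pd ψ i x)).re := by
  have hψc : HasFDerivAt (fun y => (starRingEnd ℂ) (ψ y))
      ((Complex.conjCLE : ℂ ≃L[ℝ] ℂ).toContinuousLinearMap.comp (fderiv ℝ ψ x)) x := by
    have := ((Complex.conjCLE : ℂ ≃L[ℝ] ℂ).toContinuousLinearMap.hasFDerivAt
        (x := ψ x)).comp x (hψ x).hasFDerivAt
    exact this
  have hmul := ((hφ x).hasFDerivAt.mul hψc)
  have hre := (Complex.reCLM.hasFDerivAt (x := φ x * (starRingEnd ℂ) (ψ x))).comp x hmul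
  have hfd := hre.fderiv
  show (fderiv ℝ (fun y => (φ y * (starRingEnd ℂ) (ψ y)).re) x) (EuclideanSpace.single i 1) = _
  have heqf : (fun y => (φ y * (starRingEnd ℂ) (ψ y)).re)
      = Complex.reCLM ∘ (fun y => φ y * (starRingEnd ℂ) (ψ y)) := rfl
  rw [heqf, show (fun y => φ y * (starRingEnd ℂ) (ψ y)) = φ * fun y => (starRingEnd ℂ) (ψ y)
    from rfl, hfd]
  simp [pd, mul_comm]
  ring

lemma mul_conj_re_contDiff {φ ψ : Euc k → ℂ} (hφ : ContDiff ℝ 1 φ) (hψ : ContDiff ℝ 1 ψ) :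
    ContDiff ℝ 1 (fun y => (φ y * (starRingEnd ℂ) (ψ y)).re) := by
  have h1 : ContDiff ℝ 1 (fun y => (starRingEnd ℂ) (ψ y)) := by
    have := (Complex.conjCLE : ℂ ≃L[ℝ] ℂ).contDiff.comp hψ
    exact this
  exact Complex.reCLM.contDiff.comp (hφ.mul h1)

lemma mul_conj_re_hcs {φ ψ : Euc k → ℂ} (hφ : HasCompactSupport φ) :
    HasCompactSupport (fun y => (φ y * (starRingEnd ℂ) (ψ y)).re) := by
  have h1 : HasCompactSupport (fun y => φ y * (starRingEnd ℂ) (ψ y)) := hφ.mul_right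
  exact h1.comp_left (g := Complex.re) rfl

lemma integral_fderiv_apply_eq_zero {g : Euc k → ℝ} {C : NNReal} (hg : LipschitzWith C g)
    (h'g : HasCompactSupport g) (hd : Differentiable ℝ g) (w : Euc k) :
    ∫ x, fderiv ℝ g x w = 0 := by
  have h := LipschitzWith.integral_lineDeriv_mul_eq (μ := (volume : Measure (Euc k)))
      (LipschitzWith.const (1 : ℝ)) hg h'g (-w)
  have h0 : (∫ x : Euc k, lineDeriv ℝ (fun _ => (1:ℝ)) x (-w) * g x) = 0 := by
    simp [lineDeriv]
  have h1 : (∫ x : Euc k, lineDeriv ℝ g x (-(-w)) * (fun _ : Euc k => (1:ℝ)) x)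
      = ∫ x, fderiv ℝ g x w := by
    congr 1
    funext x
    rw [neg_neg]
    simp [(hd x).lineDeriv_eq_fderiv]
  rw [h0, h1] at h
  exact h.symm

lemma integral_pd_C1_eq_zero {g : Euc k → ℝ} (hg : ContDiff ℝ 1 g)
    (h'g : HasCompactSupport g) (i : Fin k) : ∫ x, pd g i x = 0 := by
  obtain ⟨C, hC⟩ := hg.lipschitzWith_of_hasCompactSupport h'g one_ne_zero
  exact integral_fderiv_apply_eq_zero hC h'g (hg.differentiable one_ne_zero) _

lemma integral_pd_eq_zero' {g : Euc k → ℝ} (hd : Differentiable ℝ g)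
    (h'g : HasCompactSupport g) {B : ℝ} (hB0 : 0 ≤ B) (hB : ∀ x, ‖fderiv ℝ g x‖ ≤ B)
    (i : Fin k) : ∫ x, pd g i x = 0 := by
  have hlip : LipschitzWith B.toNNReal g := by
    apply lipschitzWith_of_nnnorm_fderiv_le hd
    intro x
    rw [← NNReal.coe_le_coe, coe_nnnorm, Real.coe_toNNReal _ hB0]
    exact hB x
  exact integral_fderiv_apply_eq_zero hlip h'g hd _

end Helpers

/-- The ∂_d-multiplier identity (eg4), case without interface. -/
theorem helmholtz_dd_identity {d : ℕ} (ε : ℝ) (hε : 0 < ε)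
    (n : Euc (d+1) → ℝ) (hn : Differentiable ℝ n)
    (hnW : ∃ M, ∀ x, |n x| ≤ M ∧ ‖fderiv ℝ n x‖ ≤ M)
    (u f : Euc (d+1) → ℂ) (hu : ContDiff ℝ 2 u) (hudecay : HasCompactSupport u)
    (hf : MemLp f 2 (volume : Measure (Euc (d+1))))
    (heq : ∀ x, Complex.I * ε * u x + lap u x + n x * u x = f x) :
    (1/2) * ∫ x, pd n (Fin.last d) x * ‖u x‖^2
      = -(∫ x, f x * (starRingEnd ℂ) (pd u (Fin.last d) x)).re
        - ε * (∫ x, u x * (starRingEnd ℂ) (pd u (Fin.last d) x)).im := by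
  classical
  set e := Fin.last d with he
  obtain ⟨M, hM⟩ := hnW
  have hM0 : 0 ≤ M := le_trans (abs_nonneg _) (hM 0).1
  -- basic regularity facts
  have hudiff : Differentiable ℝ u := hu.differentiable two_ne_zero
  have hu1 : ∀ i, ContDiff ℝ 1 (pd u i) := fun i => pd_contDiff hu i
  have hpdiff : ∀ i, Differentiable ℝ (pd u i) := fun i => (hu1 i).differentiable one_ne_zero
  have hpcs : ∀ i, HasCompactSupport (pd u i) := fun i => pd_hcs hudecay i
  -- abbreviations
  set c : Euc (d+1) → ℂ := fun x => (starRingEnd ℂ) (pd u e x) with hc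
  set G : Fin (d+1) → Euc (d+1) → ℝ :=
    fun i x => (pd u i x * (starRingEnd ℂ) (pd u e x)).re with hG
  set Qi : Fin (d+1) → Euc (d+1) → ℝ :=
    fun i x => (pd u i x * (starRingEnd ℂ) (pd u i x)).re with hQi
  set Q : Euc (d+1) → ℝ := fun x => (u x * (starRingEnd ℂ) (u x)).re with hQ
  set NQ : Euc (d+1) → ℝ := fun x => n x * Q x with hNQ
  have hGc1 : ∀ i, ContDiff ℝ 1 (G i) := fun i => mul_conj_re_contDiff (hu1 i) (hu1 e)
  have hGcs : ∀ i, HasCompactSupport (G i) := fun i => mul_conj_re_hcs (hpcs i)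
  have hQic1 : ∀ i, ContDiff ℝ 1 (Qi i) := fun i => mul_conj_re_contDiff (hu1 i) (hu1 i)
  have hQics : ∀ i, HasCompactSupport (Qi i) := fun i => mul_conj_re_hcs (hpcs i)
  have hQc1 : ContDiff ℝ 1 Q :=
    mul_conj_re_contDiff (hu.of_le one_le_two) (hu.of_le one_le_two)
  have hQcs : HasCompactSupport Q := mul_conj_re_hcs hudecay
  have hQdiff : Differentiable ℝ Q := hQc1.differentiable one_ne_zero
  have hNQdiff : Differentiable ℝ NQ := hn.mul hQdiff
  have hNQcs : HasCompactSupport NQ := hQcs.mul_left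
  have hQnorm : ∀ x, Q x = ‖u x‖^2 := by
    intro x
    simp [hQ, Complex.mul_conj, Complex.normSq_eq_norm_sq,
      ← Complex.ofReal_pow]
  -- product rule for NQ
  have hNQpd : ∀ x, pd NQ e x = pd n e x * Q x + n x * pd Q e x := by
    intro x
    have hfd : fderiv ℝ NQ x = n x • fderiv ℝ Q x + Q x • fderiv ℝ n x :=
      fderiv_mul (hn x) (hQdiff x)
    show fderiv ℝ NQ x (EuclideanSpace.single e 1) = _
    rw [hfd]
    simp [pd]
    ring
  -- fderiv bound for NQ
  obtain ⟨C1, hC1⟩ := (hQcs.fderiv (𝕜 := ℝ)).exists_bound_of_continuous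
      (hQc1.continuous_fderiv one_ne_zero)
  obtain ⟨C2, hC2⟩ := hQcs.exists_bound_of_continuous hQc1.continuous
  have hNQbound : ∀ x, ‖fderiv ℝ NQ x‖ ≤ M * C1 + C2 * M := by
    intro x
    rw [show NQ = n * Q from rfl, fderiv_mul (hn x) (hQdiff x)]
    calc ‖n x • fderiv ℝ Q x + Q x • fderiv ℝ n x‖
        ≤ ‖n x • fderiv ℝ Q x‖ + ‖Q x • fderiv ℝ n x‖ := norm_add_le _ _
      _ = |n x| * ‖fderiv ℝ Q x‖ + |Q x| * ‖fderiv ℝ n x‖ := by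
          rw [norm_smul, norm_smul]; simp
      _ ≤ M * C1 + C2 * M := by
          have h1 := (hM x).1
          have h2 := (hM x).2
          have h3 := hC1 x
          have h4 : |Q x| ≤ C2 := by simpa using hC2 x
          have := abs_nonneg (n x)
          have := abs_nonneg (Q x)
          have := norm_nonneg (fderiv ℝ Q x)
          have := norm_nonneg (fderiv ℝ n x)
          nlinarith
  have hB0 : 0 ≤ M * C1 + C2 * M := le_trans (norm_nonneg _) (hNQbound 0)
  -- the three vanishing integrals
  have hIG : ∀ i, ∫ x, pd (G i) i x = 0 :=
    fun i => integral_pd_C1_eq_zero (hGc1 i) (hGcs i) i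
  have hIQi : ∀ i, ∫ x, pd (Qi i) e x = 0 :=
    fun i => integral_pd_C1_eq_zero (hQic1 i) (hQics i) e
  have hINQ : ∫ x, pd NQ e x = 0 :=
    integral_pd_eq_zero' hNQdiff hNQcs hB0 hNQbound e
  -- integrability
  have hccont : Continuous c := Complex.continuous_conj.comp ((hu1 e).continuous)
  have hccs : HasCompactSupport c := (hpcs e).comp_left (g := starRingEnd ℂ) (map_zero _)
  have intequc : Integrable (fun x => u x * c x) :=
    (hu.continuous.mul hccont).integrable_of_hasCompactSupport hccs.mul_left
  have i1 : Integrable (fun x => (u x * c x).im) := by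
    have : Continuous (fun x => (u x * c x).im) :=
      Complex.continuous_im.comp (hu.continuous.mul hccont)
    exact this.integrable_of_hasCompactSupport
      ((hccs.mul_left).comp_left (g := Complex.im) rfl)
  have i2' : ∀ i, Integrable (fun x => pd (G i) i x) := fun i =>
    (pd_continuous (hGc1 i) i).integrable_of_hasCompactSupport (pd_hcs (hGcs i) i)
  have i3' : ∀ i, Integrable (fun x => pd (Qi i) e x) := fun i =>
    (pd_continuous (hQic1 i) e).integrable_of_hasCompactSupport (pd_hcs (hQics i) e)
  have i2 : Integrable (fun x => ∑ i, pd (G i) i x) := by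
    apply integrable_finset_sum
    intro i _
    exact i2' i
  have i3 : Integrable (fun x => ∑ i, pd (Qi i) e x) := by
    apply integrable_finset_sum
    intro i _
    exact i3' i
  have hpdn_meas : AEStronglyMeasurable (fun x => pd n e x) volume := by
    have : Measurable (fun x => pd n e x) :=
      ((ContinuousLinearMap.apply ℝ ℝ (EuclideanSpace.single e 1)).continuous.measurable).comp
        (measurable_fderiv ℝ n)
    exact this.aestronglyMeasurable
  have hpdn_bdd : ∀ x, ‖pd n e x‖ ≤ M * ‖(EuclideanSpace.single e 1 : Euc (d+1))‖ := by
    intro x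
    calc ‖pd n e x‖ ≤ ‖fderiv ℝ n x‖ * ‖(EuclideanSpace.single e 1 : Euc (d+1))‖ :=
          (fderiv ℝ n x).le_opNorm _
      _ ≤ M * ‖(EuclideanSpace.single e 1 : Euc (d+1))‖ := by
          have := (hM x).2
          have := norm_nonneg (EuclideanSpace.single e 1 : Euc (d+1))
          nlinarith
  have iQ : Integrable Q := hQc1.continuous.integrable_of_hasCompactSupport hQcs
  have i5 : Integrable (fun x => pd n e x * Q x) :=
    iQ.bdd_mul hpdn_meas (Filter.Eventually.of_forall hpdn_bdd)
  have i4 : Integrable (fun x => pd NQ e x) := by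
    have t2 : Integrable (fun x => n x * pd Q e x) :=
      ((pd_continuous hQc1 e).integrable_of_hasCompactSupport (pd_hcs hQcs e)).bdd_mul
        (hn.continuous.aestronglyMeasurable) (Filter.Eventually.of_forall fun x => by simpa using (hM x).1)
    exact (i5.add t2).congr (Filter.Eventually.of_forall (fun x => (hNQpd x).symm))
  have hlapcont : Continuous (lap u) := by
    apply continuous_finset_sum
    intro i _
    exact pd_continuous (hu1 i) i
  have hfc : (fun x => f x * c x)
      = fun x => (Complex.I * ε * u x + lap u x + n x * u x) * c x := by
    funext x
    rw [heq x]
  have integf : Integrable (fun x => f x * c x) := by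
    rw [hfc]
    apply Continuous.integrable_of_hasCompactSupport
    · exact (((continuous_const.mul hu.continuous).add hlapcont).add
        ((Complex.continuous_ofReal.comp hn.continuous).mul hu.continuous)).mul hccont
    · exact hccs.mul_left
  have hfcre : (fun x => (f x * c x).re)
      = fun x => ((Complex.I * ε * u x + lap u x + n x * u x) * c x).re := by
    funext x
    rw [heq x]
  have ifc : Integrable (fun x => (f x * c x).re) := by
    rw [hfcre]
    apply Continuous.integrable_of_hasCompactSupport
    · exact Complex.continuous_re.comp
        ((((continuous_const.mul hu.continuous).add hlapcont).add
        ((Complex.continuous_ofReal.comp hn.continuous).mul hu.continuous)).mul hccont)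
    · exact (hccs.mul_left.comp_left (g := Complex.re) rfl :)
  -- pointwise identity
  have P : ∀ x, (f x * c x).re = -ε * (u x * c x).im + (∑ i, pd (G i) i x)
      - (1/2) * (∑ i, pd (Qi i) e x) + (1/2) * pd NQ e x - (1/2) * (pd n e x * Q x) := by
    intro x
    rw [← heq x]
    have h2 : (lap u x * c x).re = ∑ i, (pd (pd u i) i x * c x).re := by
      rw [lap, Finset.sum_mul]
      exact Complex.re_sum _ _
    have h3 : ∀ i, (pd (pd u i) i x * c x).re
        = pd (G i) i x - (1/2) * pd (Qi i) e x := by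
      intro i
      have hGpd := pd_mul_conj_re (hpdiff i) (hpdiff e) i x
      have hswap : pd (pd u e) i x = pd (pd u i) e x := pd_comm hu e i x
      have hQipd := pd_mul_conj_re (hpdiff i) (hpdiff i) e x
      have hcomm := re_mul_conj_comm (pd (pd u i) e x) (pd u i x)
      rw [hswap] at hGpd
      simp only [hG, hQi, hc] at *
      rw [hGpd, hQipd]
      linarith
    have h4 : ((n x : ℂ) * u x * c x).re = (1/2) * (pd NQ e x - pd n e x * Q x) := by
      have sub2 : (u x * c x).re = (1/2) * pd Q e x := by
        have hQpd := pd_mul_conj_re hudiff hudiff e x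
        have hcomm := re_mul_conj_comm (pd u e x) (u x)
        simp only [hQ, hc] at *
        rw [hQpd]
        linarith
      have sub3 := hNQpd x
      rw [mul_assoc, Complex.re_ofReal_mul, sub2, sub3]
      ring
    rw [add_mul, add_mul, Complex.add_re, Complex.add_re, h2, h4]
    rw [Finset.sum_congr rfl (fun i _ => h3 i)]
    rw [Finset.sum_sub_distrib, ← Finset.mul_sum]
    have h1 : (Complex.I * ε * u x * c x).re = -ε * (u x * c x).im := by
      simp [Complex.mul_re, Complex.mul_im]
      ring
    rw [h1]
    ring
  -- integrate the pointwise identity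
  have ia : Integrable (fun x => -ε * (u x * c x).im) := i1.const_mul (-ε)
  have iab : Integrable (fun x => -ε * (u x * c x).im + ∑ i, pd (G i) i x) := ia.add i2
  have iabc : Integrable (fun x => -ε * (u x * c x).im + (∑ i, pd (G i) i x)
      - (1/2) * (∑ i, pd (Qi i) e x)) := iab.sub (i3.const_mul (1/2))
  have iabcd : Integrable (fun x => -ε * (u x * c x).im + (∑ i, pd (G i) i x)
      - (1/2) * (∑ i, pd (Qi i) e x) + (1/2) * pd NQ e x) := iabc.add (i4.const_mul (1/2))
  have i5' : Integrable (fun x => (1/2) * (pd n e x * Q x)) := i5.const_mul (1/2)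
  have hsplit : ∫ x, (f x * c x).re
      = -ε * (∫ x, (u x * c x).im) - (1/2) * ∫ x, pd n e x * Q x := by
    have e1 : ∫ x, (f x * c x).re
        = ∫ x, (-ε * (u x * c x).im + (∑ i, pd (G i) i x)
          - (1/2) * (∑ i, pd (Qi i) e x) + (1/2) * pd NQ e x
          - (1/2) * (pd n e x * Q x)) :=
      integral_congr_ae (Filter.Eventually.of_forall P)
    rw [e1, integral_sub iabcd i5', integral_add iabc (i4.const_mul (1/2)),
      integral_sub iab (i3.const_mul (1/2)), integral_add ia i2,
      integral_const_mul, integral_const_mul, integral_const_mul, integral_const_mul,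
      integral_finset_sum _ (fun i _ => i2' i), integral_finset_sum _ (fun i _ => i3' i)]
    simp only [hIG, hIQi, hINQ, Finset.sum_const_zero]
    ring
  -- conclude
  have hre : (∫ x, f x * c x).re = ∫ x, (f x * c x).re := by
    have h := integral_re (𝕜 := ℂ) integf
    simpa using h.symm
  have him : (∫ x, u x * c x).im = ∫ x, (u x * c x).im := by
    have h := integral_im (𝕜 := ℂ) intequc
    simpa using h.symm
  have hA : (∫ x, pd n e x * ‖u x‖^2) = ∫ x, pd n e x * Q x := by
    congr 1
    funext x
    rw [hQnorm x]
  show (1/2) * ∫ x, pd n e x * ‖u x‖^2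
      = -(∫ x, f x * c x).re - ε * (∫ x, u x * c x).im
  rw [hA, hre, him, hsplit]
  ring
end
end
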